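/- For any ν_1,…,ν_N ∈ ℂ, the partition function Z_N with rational weights is a symmetric polynomial function of λ_1,…,λ_N of degree at most N−1 in each variable: there exists a polynomial P ∈ ℂ[λ_1,…,λ_N], symmetric under all permutations of the variables and of degree at most N−1 in each λ_j, such that Z_N(λ_1,…,λ_N) = P(λ_1,…,λ_N) for all λ_1,…,λ_N ∈ ℂ. -/

import Mathlib

open scoped BigOperators
noncomputable section

namespace SixVertex

/-- A spin configuration of the `N`-site quantum chain: one spin (`0` = up, `1` = down)
at each site. Site `k` of the paper (k = 1,…,N) corresponds to index `k-1 : Fin N`. -/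
abbrev Cfg (N : ℕ) := Fin N → Fin 2

/-- Operators on the quantum space `H = (ℂ²)^{⊗N}`, represented as matrices in the
standard (spin-configuration) basis. -/
abbrev Op (N : ℕ) := Matrix (Cfg N) (Cfg N) ℂ

/-- The operator acting as the 2×2 matrix `M` in the `k`-th tensor factor and as the
identity elsewhere. -/
def siteOp {N : ℕ} (k : Fin N) (M : Matrix (Fin 2) (Fin 2) ℂ) : Op N :=
  Matrix.of fun s s' => if ∀ i, i ≠ k → s i = s' i then M (s k) (s' k) else 0

def piPlus : Matrix (Fin 2) (Fin 2) ℂ := !![1, 0; 0, 0]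
def piMinus : Matrix (Fin 2) (Fin 2) ℂ := !![0, 0; 0, 1]
def sigmaPlus : Matrix (Fin 2) (Fin 2) ℂ := !![0, 1; 0, 0]
def sigmaMinus : Matrix (Fin 2) (Fin 2) ℂ := !![0, 0; 1, 0]

/-- Rational weight `a(λ,ν) = λ - ν + 1`. -/
def aW (l v : ℂ) : ℂ := l - v + 1
/-- Rational weight `b(λ,ν) = λ - ν`. -/
def bW (l v : ℂ) : ℂ := l - v

/-- The L-operator at site `k` (a 2×2 matrix in the auxiliary space, with entries
operators on the quantum space); the weight `c` equals `1`. -/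
def Lop {N : ℕ} (ν : Fin N → ℂ) (k : Fin N) (l : ℂ) :
    Matrix (Fin 2) (Fin 2) (Op N) :=
  !![aW l (ν k) • siteOp k piPlus + bW l (ν k) • siteOp k piMinus,
       siteOp k sigmaMinus;
     siteOp k sigmaPlus,
       bW l (ν k) • siteOp k piPlus + aW l (ν k) • siteOp k piMinus]

/-- The monodromy matrix `T(λ) = L_N(λ,ν_N) ⋯ L_1(λ,ν_1)`. -/
def monodromy {N : ℕ} (ν : Fin N → ℂ) (l : ℂ) :
    Matrix (Fin 2) (Fin 2) (Op N) :=
  (((List.finRange N).reverse).map fun k => Lop ν k l).prod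

/-- The operator `A(λ)`. -/
def Aop {N : ℕ} (ν : Fin N → ℂ) (l : ℂ) : Op N := monodromy ν l 0 0
/-- The operator `B(λ)`. -/
def Bop {N : ℕ} (ν : Fin N → ℂ) (l : ℂ) : Op N := monodromy ν l 0 1
/-- The operator `C(λ)`. -/
def Cop {N : ℕ} (ν : Fin N → ℂ) (l : ℂ) : Op N := monodromy ν l 1 0
/-- The operator `D(λ)`. -/
def Dop {N : ℕ} (ν : Fin N → ℂ) (l : ℂ) : Op N := monodromy ν l 1 1

/-- The all-spins-up configuration. -/
def upCfg (N : ℕ) : Cfg N := fun _ => 0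
/-- The all-spins-down configuration. -/
def downCfg (N : ℕ) : Cfg N := fun _ => 1

/-- The basis vector of `H` corresponding to a spin configuration `s`. -/
def basisVec {N : ℕ} (s : Cfg N) : Cfg N → ℂ := Pi.single s 1

/-- The all-spins-up vacuum vector `|⇑⟩`. -/
def upVec (N : ℕ) : Cfg N → ℂ := basisVec (upCfg N)
/-- The all-spins-down vector `|⇓⟩`. -/
def downVec (N : ℕ) : Cfg N → ℂ := basisVec (downCfg N)

/-- The partition function of the six-vertex model with domain wall boundary conditions:
`Z_N(λ_1,…,λ_N) = ⟨⇓| B(λ_N) ⋯ B(λ_1) |⇑⟩`. -/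
def Zfun (N : ℕ) (ν : Fin N → ℂ) (lam : Fin N → ℂ) : ℂ :=
  (((List.finRange N).reverse).map fun j => Bop ν (lam j)).prod (downCfg N) (upCfg N)

end SixVertex
end

noncomputable section
namespace SVAux
open SixVertex Matrix

variable {R : Type*} [CommRing R] {N : ℕ}

abbrev OpG (R : Type*) [CommRing R] (N : ℕ) := Matrix (Cfg N) (Cfg N) R

def siteG (k : Fin N) (M : Matrix (Fin 2) (Fin 2) R) : OpG R N :=
  Matrix.of fun s s' => if ∀ i, i ≠ k → s i = s' i then M (s k) (s' k) else 0

lemma siteG_apply (k : Fin N) (M : Matrix (Fin 2) (Fin 2) R) (s s' : Cfg N) :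
    siteG k M s s' = if ∀ i, i ≠ k → s i = s' i then M (s k) (s' k) else 0 := rfl

lemma siteG_one (k : Fin N) : siteG k (1 : Matrix (Fin 2) (Fin 2) R) = 1 := by
  ext s s'
  rw [siteG_apply]
  by_cases h : ∀ i, i ≠ k → s i = s' i
  · rw [if_pos h]
    by_cases h2 : s k = s' k
    · have hss : s = s' := funext fun i => by
        by_cases hi : i = k
        · subst hi; exact h2
        · exact h i hi
      subst hss
      rw [Matrix.one_apply_eq, Matrix.one_apply_eq]
    · have hss : s ≠ s' := fun hc => h2 (by rw [hc])
      rw [Matrix.one_apply_ne h2, Matrix.one_apply_ne hss]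
  · have hss : s ≠ s' := fun hc => h (by subst hc; intro i _; rfl)
    rw [if_neg h, Matrix.one_apply_ne hss]

lemma siteG_add (k : Fin N) (M M' : Matrix (Fin 2) (Fin 2) R) :
    siteG k (M + M') = siteG k M + siteG k M' := by
  ext s s'
  simp only [siteG_apply, Matrix.add_apply]
  split_ifs <;> first | rfl | simp

lemma siteG_zero (k : Fin N) : siteG k (0 : Matrix (Fin 2) (Fin 2) R) = 0 := by
  ext s s'; simp [siteG_apply]

lemma siteG_smul (k : Fin N) (c : R) (M : Matrix (Fin 2) (Fin 2) R) :
    siteG k (c • M) = c • siteG k M := by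
  ext s s'
  simp only [siteG_apply, Matrix.smul_apply, smul_eq_mul]
  split_ifs <;> first | rfl | simp

lemma siteG_mul (k : Fin N) (M M' : Matrix (Fin 2) (Fin 2) R) :
    siteG k M * siteG k M' = siteG k (M * M') := by
  ext s s'
  rw [Matrix.mul_apply, siteG_apply]
  by_cases h : ∀ i, i ≠ k → s i = s' i
  · rw [if_pos h]
    have key : ∀ t : Cfg N, (siteG k M s t) * (siteG k M' t s') =
        if ∀ i, i ≠ k → t i = s i then M (s k) (t k) * M' (t k) (s' k) else 0 := by
      intro t
      rw [siteG_apply, siteG_apply]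
      by_cases h1 : ∀ i, i ≠ k → t i = s i
      · have h2 : ∀ i, i ≠ k → s i = t i := fun i hi => (h1 i hi).symm
        have h3 : ∀ i, i ≠ k → t i = s' i := fun i hi => (h1 i hi).trans (h i hi)
        rw [if_pos h1, if_pos h2, if_pos h3]
      · have h2 : ¬ ∀ i, i ≠ k → s i = t i := fun hc => h1 fun i hi => (hc i hi).symm
        rw [if_neg h1, if_neg h2, zero_mul]
    rw [Finset.sum_congr rfl fun t _ => key t]
    rw [show (Finset.univ : Finset (Cfg N)) = Finset.univ by rfl]
    have himg : ∀ t : Cfg N, (∀ i, i ≠ k → t i = s i) ↔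
        t ∈ Finset.univ.image (fun c : Fin 2 => Function.update s k c) := by
      intro t
      constructor
      · intro ht
        refine Finset.mem_image.mpr ⟨t k, Finset.mem_univ _, ?_⟩
        funext i
        by_cases hi : i = k
        · subst hi; simp
        · rw [Function.update_of_ne hi]; exact (ht i hi).symm
      · intro ht i hi
        obtain ⟨c, _, rfl⟩ := Finset.mem_image.mp ht
        rw [Function.update_of_ne hi]
    rw [← Finset.sum_filter]
    have hfil : Finset.univ.filter (fun t : Cfg N => ∀ i, i ≠ k → t i = s i)
        = Finset.univ.image (fun c : Fin 2 => Function.update s k c) := by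
      ext t; simp only [Finset.mem_filter, Finset.mem_univ, true_and]
      exact himg t
    rw [hfil, Finset.sum_image (by
      intro c _ c' _ hcc
      have := congrFun hcc k
      simpa using this)]
    rw [Matrix.mul_apply]
    apply Finset.sum_congr rfl
    intro c _
    simp
  · rw [if_neg h]
    apply Finset.sum_eq_zero
    intro t _
    rw [siteG_apply, siteG_apply]
    by_cases h1 : ∀ i, i ≠ k → s i = t i
    · have h2 : ¬ ∀ i, i ≠ k → t i = s' i := fun hc =>
        h fun i hi => (h1 i hi).trans (hc i hi)
      rw [if_neg h2, mul_zero]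
    · rw [if_neg h1, zero_mul]

lemma siteG_comm {j k : Fin N} (h : j ≠ k) (M M' : Matrix (Fin 2) (Fin 2) R) :
    Commute (siteG j M) (siteG k M') := by
  have master : ∀ (j k : Fin N), j ≠ k → ∀ (M M' : Matrix (Fin 2) (Fin 2) R) (s s' : Cfg N),
      (siteG j M * siteG k M') s s' =
      if ∀ i, i ≠ j → i ≠ k → s i = s' i then M (s j) (s' j) * M' (s k) (s' k) else 0 := by
    clear h M M'
    intro j k hjk M M' s s'
    rw [Matrix.mul_apply]
    rw [Finset.sum_eq_single_of_mem (Function.update s j (s' j)) (Finset.mem_univ _)]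
    · rw [siteG_apply, siteG_apply]
      have c1 : ∀ i, i ≠ j → s i = Function.update s j (s' j) i := by
        intro i hi; rw [Function.update_of_ne hi]
      by_cases h2 : ∀ i, i ≠ j → i ≠ k → s i = s' i
      · have c2 : ∀ i, i ≠ k → Function.update s j (s' j) i = s' i := by
          intro i hik
          by_cases hij : i = j
          · subst hij; simp
          · rw [Function.update_of_ne hij]; exact h2 i hij hik
        rw [if_pos h2, if_pos c1, if_pos c2,
          Function.update_self, Function.update_of_ne (Ne.symm hjk)]
      · have c2 : ¬ ∀ i, i ≠ k → Function.update s j (s' j) i = s' i := by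
          intro hc
          apply h2
          intro i hij hik
          have := hc i hik
          rwa [Function.update_of_ne hij] at this
        rw [if_neg c2, mul_zero, if_neg h2]
    · intro t _ ht
      rw [siteG_apply, siteG_apply]
      by_cases h1 : ∀ i, i ≠ j → s i = t i
      · by_cases h2 : ∀ i, i ≠ k → t i = s' i
        · exfalso
          apply ht
          funext i
          by_cases hij : i = j
          · subst hij
            rw [Function.update_self]
            exact h2 _ hjk
          · rw [Function.update_of_ne hij]
            exact (h1 i hij).symm
        · rw [if_neg h2, mul_zero]
      · rw [if_neg (fun hc : ∀ i, i ≠ j → s i = t i => h1 hc), zero_mul]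
  ext s s'
  rw [master j k h M M' s s', master k j (Ne.symm h) M' M s s']
  by_cases hc : ∀ i, i ≠ j → i ≠ k → s i = s' i
  · have hc' : ∀ i, i ≠ k → i ≠ j → s i = s' i := fun i h1 h2 => hc i h2 h1
    rw [if_pos hc, if_pos hc', mul_comm]
  · have hc' : ¬ ∀ i, i ≠ k → i ≠ j → s i = s' i := fun hcc => hc fun i h1 h2 => hcc i h2 h1
    rw [if_neg hc, if_neg hc']

def siteHomG (k : Fin N) : Matrix (Fin 2) (Fin 2) R →+* OpG R N where
  toFun := siteG k
  map_one' := siteG_one k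
  map_mul' := fun M M' => (siteG_mul k M M').symm
  map_zero' := siteG_zero k
  map_add' := siteG_add k

lemma siteG_map {S : Type*} [CommRing S] (φ : R →+* S) (k : Fin N)
    (M : Matrix (Fin 2) (Fin 2) R) :
    (siteG k M).map φ = siteG k (M.map φ) := by
  ext s s'
  simp only [Matrix.map_apply, siteG_apply, apply_ite φ, map_zero]


/-! ### The L-operator, monodromy and partition function over a general ring -/

def LmatG (u v : R) : Matrix (Fin 2) (Fin 2) (Matrix (Fin 2) (Fin 2) R) :=
  !![!![u - v + 1, 0; 0, u - v], !![0, 0; 1, 0];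
     !![0, 1; 0, 0], !![u - v, 0; 0, u - v + 1]]

def LG (ν : Fin N → R) (k : Fin N) (u : R) : Matrix (Fin 2) (Fin 2) (OpG R N) :=
  (LmatG u (ν k)).map (siteG k)

lemma LG_apply (ν : Fin N → R) (k : Fin N) (u : R) (a b : Fin 2) :
    LG ν k u a b = siteG k (LmatG u (ν k) a b) := rfl

lemma Lop_eq (ν : Fin N → ℂ) (k : Fin N) (l : ℂ) :
    Lop ν k l = LG (N := N) ν k l := by
  have e00 : aW l (ν k) • piPlus + bW l (ν k) • piMinus = LmatG l (ν k) 0 0 := by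
    ext a b
    fin_cases a <;> fin_cases b <;>
      simp [piPlus, piMinus, LmatG, aW, bW]
  have e11 : bW l (ν k) • piPlus + aW l (ν k) • piMinus = LmatG l (ν k) 1 1 := by
    ext a b
    fin_cases a <;> fin_cases b <;>
      simp [piPlus, piMinus, LmatG, aW, bW]
  have hsite : ∀ (M : Matrix (Fin 2) (Fin 2) ℂ), siteOp (N := N) k M = siteG k M :=
    fun _ => rfl
  refine Matrix.ext fun a b => ?_
  fin_cases a <;> fin_cases b
  · show aW l (ν k) • siteOp k piPlus + bW l (ν k) • siteOp k piMinus = LG ν k l 0 0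
    rw [LG_apply, hsite, hsite, ← siteG_smul, ← siteG_smul, ← siteG_add, e00]
  · show siteOp k sigmaMinus = LG ν k l 0 1
    rw [LG_apply, hsite]
    congr 1
  · show siteOp k sigmaPlus = LG ν k l 1 0
    rw [LG_apply, hsite]
    congr 1
  · show bW l (ν k) • siteOp k piPlus + aW l (ν k) • siteOp k piMinus = LG ν k l 1 1
    rw [LG_apply, hsite, hsite, ← siteG_smul, ← siteG_smul, ← siteG_add, e11]

def PG (ν : Fin N → R) (l : List (Fin N)) (u : R) : Matrix (Fin 2) (Fin 2) (OpG R N) :=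
  (l.map fun k => LG ν k u).prod

lemma monodromy_eq (ν : Fin N → ℂ) (l : ℂ) :
    monodromy ν l = PG ν (List.finRange N).reverse l := by
  unfold monodromy PG
  congr 1
  exact List.map_congr_left fun k _ => Lop_eq ν k l

def BG (ν : Fin N → R) (u : R) : OpG R N := PG ν (List.finRange N).reverse u 0 1

lemma Bop_eq (ν : Fin N → ℂ) (l : ℂ) : Bop ν l = BG (N := N) ν l := by
  unfold Bop BG
  rw [monodromy_eq]

def ZG (ν lam : Fin N → R) : R :=
  (((List.finRange N).reverse).map fun j => BG ν (lam j)).prod (downCfg N) (upCfg N)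

lemma Zfun_eq (ν lam : Fin N → ℂ) : Zfun N ν lam = ZG ν lam := by
  unfold Zfun ZG
  have h : (((List.finRange N).reverse).map fun j => Bop ν (lam j)) =
      (((List.finRange N).reverse).map fun j => BG ν (lam j)) :=
    List.map_congr_left fun j _ => Bop_eq ν (lam j)
  rw [h]

/-! ### Base change -/

variable {S : Type*} [CommRing S]

lemma LmatG_map (φ : R →+* S) (u v : R) (a b : Fin 2) :
    (LmatG u v a b).map φ = LmatG (φ u) (φ v) a b := by
  fin_cases a <;> fin_cases b <;>
    · ext i j
      fin_cases i <;> fin_cases j <;>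
        simp [LmatG, Matrix.map_apply, map_add, map_sub]

lemma LG_map (φ : R →+* S) (ν : Fin N → R) (k : Fin N) (u : R) :
    (LG ν k u).map (RingHom.mapMatrix (m := Cfg N) φ) =
      LG (fun i => φ (ν i)) k (φ u) := by
  ext a b
  rw [Matrix.map_apply, LG_apply, LG_apply, RingHom.mapMatrix_apply,
    siteG_map, LmatG_map]

lemma PG_map (φ : R →+* S) (ν : Fin N → R) (l : List (Fin N)) (u : R) :
    (RingHom.mapMatrix (m := Fin 2) (RingHom.mapMatrix (m := Cfg N) φ))
        (PG ν l u) =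
      PG (fun i => φ (ν i)) l (φ u) := by
  unfold PG
  rw [map_list_prod]
  congr 1
  rw [List.map_map]
  exact List.map_congr_left fun k _ => LG_map φ ν k u

lemma BG_map (φ : R →+* S) (ν : Fin N → R) (u : R) :
    (RingHom.mapMatrix (m := Cfg N) φ) (BG ν u) = BG (fun i => φ (ν i)) (φ u) := by
  have := congrFun (congrFun (congrArg (fun X => (X : Matrix (Fin 2) (Fin 2) _))
    (PG_map φ ν (List.finRange N).reverse u)) 0) 1
  simpa [BG, RingHom.mapMatrix_apply] using
    congrArg (fun X : Matrix (Fin 2) (Fin 2) (OpG S N) => X 0 1)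
      (PG_map φ ν (List.finRange N).reverse u)

lemma ZG_map (φ : R →+* S) (ν lam : Fin N → R) :
    φ (ZG ν lam) = ZG (fun i => φ (ν i)) (fun j => φ (lam j)) := by
  unfold ZG
  have : (RingHom.mapMatrix (m := Cfg N) φ)
      ((((List.finRange N).reverse).map fun j => BG ν (lam j)).prod) =
      (((List.finRange N).reverse).map fun j =>
        BG (fun i => φ (ν i)) (φ (lam j))).prod := by
    rw [map_list_prod, List.map_map]
    congr 1
    exact List.map_congr_left fun j _ => BG_map φ ν (lam j)
  have h2 := congrFun (congrFun (congrArg (fun X : OpG S N => (X : OpG S N)) this)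
    (downCfg N)) (upCfg N)
  simpa [RingHom.mapMatrix_apply, Matrix.map_apply] using h2



/-! ### Degree bounds -/

section Degrees
open MvPolynomial

variable {N : ℕ} (j : Fin N) (ν : Fin N → ℂ)

private lemma deg_one : MvPolynomial.degreeOf j (1 : MvPolynomial (Fin N) ℂ) = 0 := by
  rw [← MvPolynomial.C_1]; exact MvPolynomial.degreeOf_C _ _

private lemma deg_sum_aux {ι : Type*} (s : Finset ι)
    (f : ι → MvPolynomial (Fin N) ℂ) (c₀ D : ℕ) (h0 : c₀ ≤ D)
    (h : ∀ i ∈ s, degreeOf j (f i) + c₀ ≤ D) :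
    degreeOf j (∑ i ∈ s, f i) + c₀ ≤ D := by
  have hs : s.sup (fun i => degreeOf j (f i)) ≤ D - c₀ :=
    Finset.sup_le fun i hi => by have := h i hi; omega
  have := le_trans (degreeOf_sum_le j s f) hs
  omega

private lemma degreeOf_LG_le (k : Fin N) (u : MvPolynomial (Fin N) ℂ) (d : ℕ)
    (hu : degreeOf j u ≤ d) (a b : Fin 2) (s s' : Cfg N) :
    degreeOf j (LG (fun i => MvPolynomial.C (ν i)) k u a b s s') ≤
      if a = b then d else 0 := by
  have hA : ∀ (c : ℂ), degreeOf j (u + MvPolynomial.C c) ≤ d := fun c =>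
    le_trans (degreeOf_add_le _ _ _) (max_le hu (by simp))
  have h1 : degreeOf j (u - MvPolynomial.C (ν k) + 1) ≤ d := by
    have he : u - MvPolynomial.C (ν k) + 1 = u + MvPolynomial.C (1 - ν k) := by
      rw [map_sub, MvPolynomial.C_1]; ring
    rw [he]; exact hA _
  have h2 : degreeOf j (u - MvPolynomial.C (ν k)) ≤ d := by
    have he : u - MvPolynomial.C (ν k) = u + MvPolynomial.C (-(ν k)) := by
      rw [map_neg]; ring
    rw [he]; exact hA _
  have hone : degreeOf j (1 : MvPolynomial (Fin N) ℂ) = 0 := by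
    rw [← MvPolynomial.C_1]; exact degreeOf_C _ _
  have key : ∀ (a b x y : Fin 2),
      degreeOf j (LmatG u (MvPolynomial.C (ν k)) a b x y) ≤ if a = b then d else 0 := by
    intro a b x y
    fin_cases a <;> fin_cases b <;> fin_cases x <;> fin_cases y <;>
      simp [LmatG] <;> first | exact h1 | exact h2 | exact hone
  rw [LG_apply, siteG_apply]
  by_cases hcond : ∀ i, i ≠ k → s i = s' i
  · rw [if_pos hcond]; exact key a b (s k) (s' k)
  · rw [if_neg hcond, degreeOf_zero]; exact Nat.zero_le _

private lemma degreeOf_PG (u : MvPolynomial (Fin N) ℂ) (d : ℕ)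
    (hu : degreeOf j u ≤ d) :
    ∀ (l : List (Fin N)) (a b : Fin 2) (s s' : Cfg N),
      PG (fun i => MvPolynomial.C (ν i)) l u a b s s' = 0 ∨
      degreeOf j (PG (fun i => MvPolynomial.C (ν i)) l u a b s s') +
        (if a = b then 0 else d) ≤ d * l.length := by
  intro l
  induction l with
  | nil =>
    intro a b s s'
    by_cases hab : a = b
    · right
      subst hab
      simp only [PG, List.map_nil, List.prod_nil, Matrix.one_apply_eq, List.length_nil,
        Nat.mul_zero, if_pos rfl, Nat.add_zero]
      rw [Matrix.one_apply]
      split_ifs <;> simp [deg_one]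
    · left
      simp [PG, Matrix.one_apply, hab]
  | cons k l ih =>
    intro a b s s'
    right
    set ν' : Fin N → MvPolynomial (Fin N) ℂ := fun i => MvPolynomial.C (ν i) with hν'
    have hD : d ≤ d * (k :: l).length := by
      calc d = d * 1 := (Nat.mul_one d).symm
      _ ≤ d * (k :: l).length := Nat.mul_le_mul_left d (by simp)
    have e : PG ν' (k :: l) u a b s s' =
        ∑ c : Fin 2, ∑ t : Cfg N, LG ν' k u a c s t * PG ν' l u c b t s' := by
      show ((k :: l).map (fun k => LG ν' k u)).prod a b s s' = _
      rw [List.map_cons, List.prod_cons, Matrix.mul_apply, Matrix.sum_apply]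
      exact Finset.sum_congr rfl fun c _ => Matrix.mul_apply
    rw [e]
    apply deg_sum_aux j _ _ _ _ (le_trans (by split_ifs <;> omega) hD)
    intro c _
    apply deg_sum_aux j _ _ _ _ (le_trans (by split_ifs <;> omega) hD)
    intro t _
    rcases ih c b t s' with h0 | hIH
    · rw [h0, mul_zero, degreeOf_zero, Nat.zero_add]
      exact le_trans (by split_ifs <;> omega) hD
    · have hL := degreeOf_LG_le j ν k u d hu a c s t
      rw [← hν'] at hL
      have hm := degreeOf_mul_le j (LG ν' k u a c s t) (PG ν' l u c b t s')
      have hlen : d * (k :: l).length = d * l.length + d := by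
        simp [List.length_cons, Nat.mul_succ]
      rw [hlen]
      by_cases hac : a = c
      · rw [if_pos hac] at hL
        by_cases hcb : c = b
        · have hab : a = b := hac.trans hcb
          rw [if_pos hcb] at hIH
          rw [if_pos hab]
          omega
        · have hab : ¬ a = b := fun h => hcb (hac.symm.trans h)
          rw [if_neg hcb] at hIH
          rw [if_neg hab]
          omega
      · rw [if_neg hac] at hL
        by_cases hcb : c = b
        · rw [if_pos hcb] at hIH
          by_cases hab : a = b
          · rw [if_pos hab]; omega
          · rw [if_neg hab]; omega
        · rw [if_neg hcb] at hIH
          by_cases hab : a = b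
          · rw [if_pos hab]; omega
          · rw [if_neg hab]; omega

private lemma degreeOf_BG_le (u : MvPolynomial (Fin N) ℂ) (d : ℕ)
    (hu : degreeOf j u ≤ d) (s s' : Cfg N) :
    degreeOf j (BG (fun i => MvPolynomial.C (ν i)) u s s') ≤ d * N - d := by
  rcases degreeOf_PG j ν u d hu (List.finRange N).reverse 0 1 s s' with h0 | h
  · rw [show BG (fun i => MvPolynomial.C (ν i)) u s s' =
      PG (fun i => MvPolynomial.C (ν i)) (List.finRange N).reverse u 0 1 s s' from rfl, h0]
    simp
  · have hlen : ((List.finRange N).reverse).length = N := by simp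
    rw [hlen] at h
    have h01 : (0 : Fin 2) ≠ 1 := by decide
    rw [if_neg h01] at h
    show degreeOf j (PG (fun i => MvPolynomial.C (ν i))
      (List.finRange N).reverse u 0 1 s s') ≤ d * N - d
    omega

private lemma degreeOf_prodB_le (l : List (Fin N)) (s s' : Cfg N) :
    degreeOf j ((l.map fun i => BG (fun i' => MvPolynomial.C (ν i'))
        (MvPolynomial.X i)).prod s s') ≤ (l.count j) * (N - 1) := by
  induction l generalizing s s' with
  | nil =>
    simp only [List.map_nil, List.prod_nil]
    rw [Matrix.one_apply]
    split_ifs <;> simp [deg_one]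
  | cons i l ih =>
    rw [List.map_cons, List.prod_cons, Matrix.mul_apply]
    have := deg_sum_aux j Finset.univ
      (fun t => BG (fun i' => MvPolynomial.C (ν i')) (MvPolynomial.X i) s t *
        (l.map fun i => BG (fun i' => MvPolynomial.C (ν i')) (MvPolynomial.X i)).prod t s')
      0 ((i :: l).count j * (N - 1)) (Nat.zero_le _) ?_
    · simpa using this
    intro t _
    beta_reduce
    have hm := degreeOf_mul_le j
      (BG (fun i' => MvPolynomial.C (ν i')) (MvPolynomial.X i) s t)
      ((l.map fun i => BG (fun i' => MvPolynomial.C (ν i')) (MvPolynomial.X i)).prod t s')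
    have hrest := ih t s'
    by_cases hij : i = j
    · have hB : degreeOf j (BG (fun i' => MvPolynomial.C (ν i'))
          (MvPolynomial.X i) s t) ≤ 1 * N - 1 := by
        apply degreeOf_BG_le
        rw [hij, degreeOf_X]
        simp
      have hc : (i :: l).count j = l.count j + 1 := by
        simp [List.count_cons, hij]
      rw [hc]
      have hgoal : (l.count j + 1) * (N - 1) = l.count j * (N - 1) + (N - 1) := by ring
      omega
    · have hB : degreeOf j (BG (fun i' => MvPolynomial.C (ν i'))
          (MvPolynomial.X i) s t) ≤ 0 * N - 0 := by
        apply degreeOf_BG_le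
        rw [degreeOf_X]
        have : ¬ j = i := fun h => hij h.symm
        simp [this]
      have hc : (i :: l).count j = l.count j := by
        simp [List.count_cons, show ¬ j = i from fun h => hij h.symm, hij]
      rw [hc]
      simp only [Nat.zero_mul, Nat.sub_zero, Nat.le_zero] at hB
      omega

end Degrees


/-! ### Yang-Baxter / RTT relation and commutation of B-operators -/

section YB

def kron {α : Type*} [Mul α] (X Y : Matrix (Fin 2) (Fin 2) α) :
    Matrix (Fin 2 × Fin 2) (Fin 2 × Fin 2) α :=
  Matrix.of fun p q => X p.1 q.1 * Y p.2 q.2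

lemma kron_apply {α : Type*} [Mul α] (X Y : Matrix (Fin 2) (Fin 2) α)
    (p q : Fin 2 × Fin 2) : kron X Y p q = X p.1 q.1 * Y p.2 q.2 := rfl

lemma kron_mul {α : Type*} [Ring α] (X Y X' Y' : Matrix (Fin 2) (Fin 2) α)
    (h : ∀ a b c d, Commute (Y a b) (X' c d)) :
    kron X Y * kron X' Y' = kron (X * X') (Y * Y') := by
  ext p q
  rw [Matrix.mul_apply, kron_apply, Matrix.mul_apply, Matrix.mul_apply,
    Finset.sum_mul_sum, Fintype.sum_prod_type]
  refine Finset.sum_congr rfl fun k _ => Finset.sum_congr rfl fun k' _ => ?_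
  rw [kron_apply, kron_apply]
  exact (h p.2 k' k q.1).mul_mul_mul_comm (X p.1 k) (Y' k' q.2)

def Pswap {α : Type*} [Ring α] : Matrix (Fin 2 × Fin 2) (Fin 2 × Fin 2) α :=
  Matrix.of fun p q => if p.1 = q.2 ∧ p.2 = q.1 then 1 else 0

lemma Pswap_mul {α : Type*} [Ring α] (M : Matrix (Fin 2 × Fin 2) (Fin 2 × Fin 2) α)
    (p q : Fin 2 × Fin 2) :
    ((Pswap : Matrix (Fin 2 × Fin 2) (Fin 2 × Fin 2) α) * M) p q = M (p.2, p.1) q := by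
  rw [Matrix.mul_apply]
  rw [Finset.sum_eq_single_of_mem ((p.2, p.1) : Fin 2 × Fin 2) (Finset.mem_univ _)]
  · show (if p.1 = p.1 ∧ p.2 = p.2 then (1 : α) else 0) * _ = _
    rw [if_pos ⟨rfl, rfl⟩, one_mul]
  · intro r _ hr
    show (if p.1 = r.2 ∧ p.2 = r.1 then (1 : α) else 0) * _ = 0
    rw [if_neg, zero_mul]
    rintro ⟨h1, h2⟩
    exact hr (Prod.ext h2.symm h1.symm)
lemma mul_Pswap {α : Type*} [Ring α] (M : Matrix (Fin 2 × Fin 2) (Fin 2 × Fin 2) α)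
    (p q : Fin 2 × Fin 2) :
    (M * (Pswap : Matrix (Fin 2 × Fin 2) (Fin 2 × Fin 2) α)) p q = M p (q.2, q.1) := by
  rw [Matrix.mul_apply]
  rw [Finset.sum_eq_single_of_mem ((q.2, q.1) : Fin 2 × Fin 2) (Finset.mem_univ _)]
  · show _ * (if q.2 = q.2 ∧ q.1 = q.1 then (1 : α) else 0) = _
    rw [if_pos ⟨rfl, rfl⟩, mul_one]
  · intro r _ hr
    show _ * (if r.1 = q.2 ∧ r.2 = q.1 then (1 : α) else 0) = 0
    rw [if_neg, mul_zero]
    rintro ⟨h1, h2⟩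
    exact hr (Prod.ext h1 h2)

def Rg {α : Type*} [Ring α] [Module R α] (c : R) :
    Matrix (Fin 2 × Fin 2) (Fin 2 × Fin 2) α :=
  c • Pswap + 1

set_option maxHeartbeats 1000000 in
lemma RLL_local (u w v : R) :
    Rg (u - w) * kron (LmatG u v) (LmatG w v)
      = kron (LmatG w v) (LmatG u v) * Rg (u - w) := by
  have key : ∀ p q : Fin 2 × Fin 2,
      (u - w) • (kron (LmatG u v) (LmatG w v) (p.2, p.1) q) +
          kron (LmatG u v) (LmatG w v) p q =
        (u - w) • (kron (LmatG w v) (LmatG u v) p (q.2, q.1)) +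
          kron (LmatG w v) (LmatG u v) p q := by
    rintro ⟨i, i'⟩ ⟨j, j'⟩
    simp only [kron_apply]
    fin_cases i <;> fin_cases i' <;> fin_cases j <;> fin_cases j' <;>
      simp only [Fin.mk_zero, Fin.mk_one, Matrix.of_apply, LmatG, Matrix.cons_val',
        Matrix.cons_val_zero, Matrix.cons_val_one,
        Matrix.head_cons, Matrix.head_fin_const, Matrix.empty_val',
        Matrix.cons_val_fin_one, Matrix.mul_fin_two]
    all_goals refine Matrix.ext fun a b => ?_
    all_goals fin_cases a <;> fin_cases b <;>
      simp only [Fin.mk_zero, Fin.mk_one, Matrix.of_apply, Matrix.smul_apply,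
        Matrix.add_apply, Matrix.cons_val', Matrix.cons_val_zero,
        Matrix.cons_val_one, Matrix.head_cons, Matrix.head_fin_const, Matrix.empty_val',
        Matrix.cons_val_fin_one, smul_eq_mul] <;> ring
  refine Matrix.ext fun p q => ?_
  rw [Rg, Matrix.add_mul, Matrix.mul_add, Matrix.one_mul, Matrix.mul_one,
    Matrix.smul_mul, Matrix.mul_smul, Matrix.add_apply, Matrix.add_apply,
    Matrix.smul_apply, Matrix.smul_apply, Pswap_mul, mul_Pswap]
  exact key p q



lemma mapRg (k : Fin N) (c : R) :
    (RingHom.mapMatrix (siteHomG (N := N) k))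
        (Rg (α := Matrix (Fin 2) (Fin 2) R) c)
      = Rg (α := OpG R N) c := by
  rw [RingHom.mapMatrix_apply]
  refine Matrix.ext fun p q => ?_
  rw [Matrix.map_apply]
  show siteG k (Rg c p q) = Rg (α := OpG R N) c p q
  simp only [Rg, Matrix.add_apply, Matrix.smul_apply, Matrix.one_apply, Pswap,
    Matrix.of_apply]
  rw [siteG_add, siteG_smul, apply_ite (siteG k), apply_ite (siteG k),
    siteG_one, siteG_zero]

lemma mapKron (k : Fin N) (A B : Matrix (Fin 2) (Fin 2) (Matrix (Fin 2) (Fin 2) R)) :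
    (RingHom.mapMatrix (siteHomG (N := N) k)) (kron A B)
      = kron (A.map (siteG k)) (B.map (siteG k)) := by
  rw [RingHom.mapMatrix_apply]
  refine Matrix.ext fun p q => ?_
  rw [Matrix.map_apply]
  show siteHomG k (A p.1 q.1 * B p.2 q.2) = _
  rw [_root_.map_mul]
  rfl

lemma RLL_op (ν : Fin N → R) (k : Fin N) (u w : R) :
    Rg (α := OpG R N) (u - w) * kron (LG ν k u) (LG ν k w)
      = kron (LG ν k w) (LG ν k u) * Rg (α := OpG R N) (u - w) := by
  have h := congrArg (RingHom.mapMatrix (siteHomG (N := N) k)) (RLL_local u w (ν k))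
  rw [_root_.map_mul, _root_.map_mul, mapRg, mapKron, mapKron] at h
  exact h

lemma commute_PG (k : Fin N) (M : Matrix (Fin 2) (Fin 2) R) (ν : Fin N → R) (u : R) :
    ∀ (l : List (Fin N)), k ∉ l → ∀ (a b : Fin 2),
      Commute (siteG k M) (PG ν l u a b) := by
  intro l
  induction l with
  | nil =>
    intro _ a b
    show Commute _ ((1 : Matrix (Fin 2) (Fin 2) (OpG R N)) a b)
    rw [Matrix.one_apply]
    split_ifs
    · exact Commute.one_right _
    · exact Commute.zero_right _
  | cons m l ih =>
    intro hk a b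
    have hm : k ≠ m := fun h => hk (h ▸ (List.mem_cons_self : m ∈ m :: l))
    have hk' : k ∉ l := fun h => hk (List.mem_cons_of_mem _ h)
    show Commute _ (((m :: l).map fun k' => LG ν k' u).prod a b)
    rw [List.map_cons, List.prod_cons, Matrix.mul_apply]
    refine Commute.sum_right _ _ _ fun c _ => ?_
    exact (siteG_comm hm M _).mul_right (ih hk' c b)

lemma kron_PG (ν : Fin N → R) (u w : R) :
    ∀ (l : List (Fin N)), l.Nodup →
      kron (PG ν l u) (PG ν l w) =
        (l.map fun k => kron (LG ν k u) (LG ν k w)).prod := by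
  intro l
  induction l with
  | nil =>
    intro _
    show kron (1 : Matrix (Fin 2) (Fin 2) (OpG R N)) 1 = 1
    refine Matrix.ext fun p q => ?_
    rw [kron_apply, Matrix.one_apply, Matrix.one_apply, Matrix.one_apply]
    by_cases h1 : p.1 = q.1 <;> by_cases h2 : p.2 = q.2 <;>
      simp [h1, h2, Prod.ext_iff]
  | cons k l ih =>
    intro hnd
    rw [List.nodup_cons] at hnd
    obtain ⟨hk, hnd⟩ := hnd
    have hPu : PG ν (k :: l) u = LG ν k u * PG ν l u := by
      simp only [PG, List.map_cons, List.prod_cons]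
    have hPw : PG ν (k :: l) w = LG ν k w * PG ν l w := by
      simp only [PG, List.map_cons, List.prod_cons]
    rw [hPu, hPw, List.map_cons, List.prod_cons,
      ← kron_mul (LG ν k u) (LG ν k w) (PG ν l u) (PG ν l w)
        (fun a b c d => commute_PG k (LmatG w (ν k) a b) ν u l hk c d), ih hnd]

lemma Rg_prod_comm (ν : Fin N → R) (u w : R) :
    ∀ (l : List (Fin N)),
      Rg (α := OpG R N) (u - w) *
          (l.map fun k => kron (LG ν k u) (LG ν k w)).prod
        = (l.map fun k => kron (LG ν k w) (LG ν k u)).prod *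
          Rg (α := OpG R N) (u - w) := by
  intro l
  induction l with
  | nil => simp
  | cons k l ih =>
    rw [List.map_cons, List.prod_cons, List.map_cons, List.prod_cons,
      ← mul_assoc, RLL_op, mul_assoc, ih, ← mul_assoc]

lemma RTT (ν : Fin N → R) (u w : R) (l : List (Fin N)) (hl : l.Nodup) :
    Rg (α := OpG R N) (u - w) * kron (PG ν l u) (PG ν l w)
      = kron (PG ν l w) (PG ν l u) * Rg (α := OpG R N) (u - w) := by
  rw [kron_PG ν u w l hl, kron_PG ν w u l hl, Rg_prod_comm]

lemma smul_B_rel (ν : Fin N → R) (u w : R) :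
    (u - w + 1) • (BG ν u * BG ν w) = (u - w + 1) • (BG ν w * BG ν u) := by
  set rl := (List.finRange N).reverse with hrl
  have hnd : rl.Nodup := List.nodup_reverse.mpr (List.nodup_finRange N)
  have h := RTT ν u w rl hnd
  have e1 : (Rg (α := OpG R N) (u - w) * kron (PG ν rl u) (PG ν rl w))
      ((0 : Fin 2), (0 : Fin 2)) ((1 : Fin 2), (1 : Fin 2)) =
      (u - w) • (BG ν u * BG ν w) + BG ν u * BG ν w := by
    rw [Rg, Matrix.add_mul, Matrix.one_mul, Matrix.smul_mul, Matrix.add_apply,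
      Matrix.smul_apply, Pswap_mul, kron_apply]
    rfl
  have e2 : (kron (PG ν rl w) (PG ν rl u) * Rg (α := OpG R N) (u - w))
      ((0 : Fin 2), (0 : Fin 2)) ((1 : Fin 2), (1 : Fin 2)) =
      (u - w) • (BG ν w * BG ν u) + BG ν w * BG ν u := by
    rw [Rg, Matrix.mul_add, Matrix.mul_one, Matrix.mul_smul, Matrix.add_apply,
      Matrix.smul_apply, mul_Pswap, kron_apply]
    rfl
  have h3 : (u - w) • (BG ν u * BG ν w) + BG ν u * BG ν w =
      (u - w) • (BG ν w * BG ν u) + BG ν w * BG ν u := by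
    rw [← e1, ← e2, h]
  calc (u - w + 1) • (BG ν u * BG ν w)
      = (u - w) • (BG ν u * BG ν w) + BG ν u * BG ν w := by rw [add_smul, one_smul]
    _ = (u - w) • (BG ν w * BG ν u) + BG ν w * BG ν u := h3
    _ = (u - w + 1) • (BG ν w * BG ν u) := by rw [add_smul, one_smul]

end YB

lemma BG_commute (ν : Fin N → ℂ) {u w : ℂ} (h : u - w + 1 ≠ 0) :
    Commute (BG (N := N) ν u) (BG ν w) := by
  have hrel := smul_B_rel (R := ℂ) ν u w
  have := congrArg (fun X : OpG ℂ N => (u - w + 1)⁻¹ • X) hrel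
  simpa [smul_smul, inv_mul_cancel₀ h, commute_iff_eq] using this

end SVAux
end

open SixVertex in
/-- the partition function `Z_N` is (the evaluation of) a symmetric
polynomial in `λ_1,…,λ_N` of degree at most `N-1` in each variable. -/
theorem Zfun_symmetric_polynomial (N : ℕ) (hN : 1 ≤ N) (ν : Fin N → ℂ) :
    ∃ P : MvPolynomial (Fin N) ℂ,
      P.IsSymmetric ∧
      (∀ j : Fin N, P.degreeOf j ≤ N - 1) ∧
      ∀ lam : Fin N → ℂ, MvPolynomial.eval lam P = Zfun N ν lam := by
  classical
  set ν' : Fin N → MvPolynomial (Fin N) ℂ := fun i => MvPolynomial.C (ν i) with hν'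
  set P : MvPolynomial (Fin N) ℂ := SVAux.ZG ν' MvPolynomial.X with hP
  have heval : ∀ lam : Fin N → ℂ,
      MvPolynomial.eval lam P = SVAux.ZG ν lam := by
    intro lam
    have h := SVAux.ZG_map (MvPolynomial.eval lam) ν' MvPolynomial.X
    have h1 : (fun i => MvPolynomial.eval lam (ν' i)) = ν := by
      funext i; simp [hν']
    have h2 : (fun j => MvPolynomial.eval lam (MvPolynomial.X (R := ℂ) j)) = lam := by
      funext j; simp
    rw [h1, h2] at h
    exact h
  set rl : List (Fin N) := (List.finRange N).reverse with hrl
  have hnd : rl.Nodup := List.nodup_reverse.mpr (List.nodup_finRange N)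
  have key : ∀ (σ : Equiv.Perm (Fin N)) (lam : Fin N → ℂ),
      (∀ a b : Fin N, a ≠ b → lam a - lam b + 1 ≠ 0) →
      SVAux.ZG ν (lam ∘ σ) = SVAux.ZG ν lam := by
    intro σ lam hgen
    have hmm : (rl.map fun j => SVAux.BG ν ((lam ∘ σ) j)) =
        (rl.map σ).map fun j => SVAux.BG ν (lam j) := by
      rw [List.map_map]
      rfl
    have hperm : List.Perm (rl.map σ) rl := by
      refine List.perm_of_nodup_nodup_toFinset_eq (hnd.map σ.injective) hnd ?_
      ext x
      simp only [List.mem_toFinset, List.mem_map, hrl, List.mem_reverse,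
        List.mem_finRange, true_and, iff_true]
      exact ⟨σ.symm x, σ.apply_symm_apply x⟩
    have hpair : ((rl.map σ).map fun j => SVAux.BG ν (lam j)).Pairwise Commute := by
      rw [List.pairwise_map]
      exact (hnd.map σ.injective).imp fun hab => SVAux.BG_commute ν (hgen _ _ hab)
    have hprod : ((rl.map fun j => SVAux.BG ν ((lam ∘ σ) j)).prod) =
        ((rl.map fun j => SVAux.BG ν (lam j)).prod) := by
      rw [hmm]
      exact (hperm.map _).prod_eq' hpair
    show ((rl.map fun j => SVAux.BG ν ((lam ∘ σ) j)).prod) (downCfg N) (upCfg N) =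
      ((rl.map fun j => SVAux.BG ν (lam j)).prod) (downCfg N) (upCfg N)
    rw [hprod]
  have hsym : ∀ σ : Equiv.Perm (Fin N), MvPolynomial.rename σ P = P := by
    intro σ
    set g : MvPolynomial (Fin N) ℂ :=
      ∏ p ∈ Finset.univ.offDiag, (MvPolynomial.X p.1 - MvPolynomial.X p.2 + 1) with hg
    have hgne : g ≠ 0 := by
      rw [hg]
      refine Finset.prod_ne_zero_iff.mpr fun p _ => ?_
      intro hzero
      have h0 := congrArg (MvPolynomial.eval (fun _ : Fin N => (0 : ℂ))) hzero
      simp at h0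
    have hmul : g * (MvPolynomial.rename σ P - P) = 0 := by
      apply MvPolynomial.funext
      intro lam
      rw [map_mul, map_sub, map_zero]
      by_cases hgl : MvPolynomial.eval lam g = 0
      · rw [hgl, zero_mul]
      · have hcond : ∀ a b : Fin N, a ≠ b → lam a - lam b + 1 ≠ 0 := by
          intro a b hab
          rw [hg, map_prod] at hgl
          have hfac := Finset.prod_ne_zero_iff.mp hgl (a, b)
            (Finset.mem_offDiag.mpr ⟨Finset.mem_univ _, Finset.mem_univ _, hab⟩)
          simpa using hfac
        rw [MvPolynomial.eval_rename, heval, heval, key σ lam hcond, sub_self, mul_zero]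
    exact sub_eq_zero.mp ((mul_eq_zero.mp hmul).resolve_left hgne)
  have hdeg : ∀ j : Fin N, P.degreeOf j ≤ N - 1 := by
    intro j
    have hcount : rl.count j = 1 := List.count_eq_one_of_mem hnd (by simp [hrl])
    have hb := SVAux.degreeOf_prodB_le j ν rl (downCfg N) (upCfg N)
    rw [hcount, one_mul] at hb
    exact hb
  exact ⟨P, hsym, hdeg, fun lam => (heval lam).trans (SVAux.Zfun_eq ν lam).symm⟩
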